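/- Suppose γ(M) > 1. Let ν be an optimal finite positive Radon Borel measure on K, and let μ be a finite positive Radon Borel measure on K with μ ≼ ν. Then μ = ν. In particular, every optimal finite positive Radon Borel measure on K is minimal. -/

import Mathlib

open MeasureTheory

/-- `Wt M` is the set `W = {(x,y) ∈ M × M : x ≠ y}`, a topological subspace of `M × M`. -/
abbrev Wt (M : Type*) [MetricSpace M] := {p : M × M // p.1 ≠ p.2}

/-- `g : W → ℝ` satisfies the G-inequality. -/
def GIneq {M : Type*} [MetricSpace M] (g : Wt M → ℝ) : Prop :=
  ∀ (x u y : M) (hxu : x ≠ u) (huy : u ≠ y) (hxy : x ≠ y),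
    dist x y * g ⟨(x, y), hxy⟩ ≤ dist x u * g ⟨(x, u), hxu⟩ + dist u y * g ⟨(u, y), huy⟩

/-- The cone `G` of continuous functions on `K = βW` satisfying the G-inequality
on points of `W`. -/
def GSet (M : Type*) [MetricSpace M] : Set (StoneCech (Wt M) → ℝ) :=
  {g | Continuous g ∧ GIneq fun p => g (stoneCechUnit p)}

/-- The Choquet-like quasi-order `μ ≼ ν`. -/
def Preceq {M : Type*} [MetricSpace M] [MeasurableSpace (StoneCech (Wt M))]
    (μ ν : Measure (StoneCech (Wt M))) : Prop :=
  ∀ g ∈ GSet M, ∫ ζ, g ζ ∂μ ≤ ∫ ζ, g ζ ∂ν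

/-- `μ` is `≼`-minimal among finite positive Radon Borel measures. -/
def IsMinimal {M : Type*} [MetricSpace M] [MeasurableSpace (StoneCech (Wt M))]
    (μ : Measure (StoneCech (Wt M))) : Prop :=
  ∀ ν : Measure (StoneCech (Wt M)),
    IsFiniteMeasure ν → ν.InnerRegular → Preceq ν μ → Preceq μ ν

/-- The concavity modulus `γ(M)`. -/
noncomputable def gammaM (M : Type*) [MetricSpace M] : ℝ :=
  sInf {r : ℝ | ∃ x u y : M, x ≠ u ∧ u ≠ y ∧ x ≠ y ∧
    r = (dist x u + dist u y) / dist x y}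

/-- `μ` is an optimal De Leeuw representation: its total mass equals the supremum of
`∫ Φf dμ` over 1-Lipschitz functions `f` vanishing at the base point, where `Φf` is the
unique continuous extension to `βW` of `(x,y) ↦ (f x − f y)/d(x,y)`. -/
def IsOptimal {M : Type*} [MetricSpace M] [MeasurableSpace (StoneCech (Wt M))]
    (basept : M) (μ : Measure (StoneCech (Wt M))) : Prop :=
  (μ Set.univ).toReal = sSup {r : ℝ | ∃ f : M → ℝ, LipschitzWith 1 f ∧ f basept = 0 ∧
    ∃ F : StoneCech (Wt M) → ℝ, Continuous F ∧
      (∀ p : Wt M, F (stoneCechUnit p) = (f p.1.1 - f p.1.2) / dist p.1.1 p.1.2) ∧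
      r = ∫ ζ, F ζ ∂μ}

section AuxMeasure

open Set

variable {X : Type*} [TopologicalSpace X] [CompactSpace X] [T2Space X]
  [MeasurableSpace X] [BorelSpace X]

lemma integrable_of_cont (μ : Measure X) [IsFiniteMeasure μ] {f : X → ℝ}
    (hf : Continuous f) : Integrable f μ :=
  hf.integrable_of_hasCompactSupport (HasCompactSupport.of_compactSpace f)

lemma meas_compact_le (μ ν : Measure X) [IsFiniteMeasure μ] [IsFiniteMeasure ν]
    [ν.InnerRegular]
    (h : ∀ f : X → ℝ, Continuous f → ∫ x, f x ∂μ = ∫ x, f x ∂ν)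
    {K : Set X} (hK : IsCompact K) : μ K ≤ ν K := by
  have key : ∀ K' : Set X, K' ⊆ Kᶜ → IsCompact K' → μ K + ν K' ≤ ν univ := by
    intro K' hsub hK'
    have hdisj : Disjoint K' K := Set.disjoint_left.mpr fun x hx hxK => hsub hx hxK
    obtain ⟨f, hf0, hf1, hficc⟩ :=
      exists_continuous_zero_one_of_isClosed hK'.isClosed hK.isClosed hdisj
    have hfc : Continuous f := f.continuous
    have hintμ : Integrable (⇑f) μ := integrable_of_cont μ hfc
    have hintν : Integrable (⇑f) ν := integrable_of_cont ν hfc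
    have h1 : (μ K).toReal ≤ ∫ x, f x ∂μ := by
      have hmono : ∀ x, K.indicator (1 : X → ℝ) x ≤ f x := by
        intro x
        by_cases hx : x ∈ K
        · rw [Set.indicator_of_mem hx, Pi.one_apply]; exact (hf1 hx).ge
        · simpa [Set.indicator_of_notMem hx] using (hficc x).1
      calc (μ K).toReal = ∫ x, K.indicator 1 x ∂μ :=
            (integral_indicator_one hK.isClosed.measurableSet).symm
        _ ≤ ∫ x, f x ∂μ :=
            integral_mono ((integrable_const (1:ℝ)).indicator hK.isClosed.measurableSet)
              hintμ hmono
    have h2 : ∫ x, f x ∂ν ≤ (ν K'ᶜ).toReal := by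
      have hmono : ∀ x, f x ≤ K'ᶜ.indicator (1 : X → ℝ) x := by
        intro x
        by_cases hx : x ∈ K'
        · simp [Set.indicator_of_notMem (by simpa using hx : x ∉ K'ᶜ), hf0 hx]
        · simpa [Set.indicator_of_mem (by simpa using hx : x ∈ K'ᶜ)] using (hficc x).2
      calc ∫ x, f x ∂ν ≤ ∫ x, K'ᶜ.indicator 1 x ∂ν :=
            integral_mono hintν
              ((integrable_const (1:ℝ)).indicator hK'.isClosed.measurableSet.compl) hmono
        _ = (ν K'ᶜ).toReal := integral_indicator_one hK'.isClosed.measurableSet.compl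
    have h3 : μ K ≤ ν K'ᶜ := by
      have := h1.trans ((h f hfc).le.trans h2)
      exact (ENNReal.toReal_le_toReal (measure_ne_top μ K) (measure_ne_top ν _)).mp this
    calc μ K + ν K' ≤ ν K'ᶜ + ν K' := add_le_add_left h3 _
      _ = ν univ := by
          rw [add_comm]; exact measure_add_measure_compl hK'.isClosed.measurableSet
  have hKuniv : μ K ≤ ν univ := by
    have := key ∅ (empty_subset _) isCompact_empty
    simpa using this
  have hKc : ν Kᶜ ≤ ν univ - μ K := by
    rw [MeasurableSet.measure_eq_iSup_isCompact hK.isClosed.measurableSet.compl ν]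
    refine iSup_le fun K' => iSup_le fun hsub => iSup_le fun hK' => ?_
    exact ENNReal.le_sub_of_add_le_left (measure_ne_top μ K) (key K' hsub hK')
  have h5 : μ K + ν Kᶜ ≤ ν univ := by
    calc μ K + ν Kᶜ ≤ μ K + (ν univ - μ K) := add_le_add_right hKc _
      _ = ν univ := add_tsub_cancel_of_le hKuniv
  have h6 : μ K ≤ ν univ - ν Kᶜ := ENNReal.le_sub_of_add_le_right (measure_ne_top ν _) h5
  have h7 : ν univ - ν Kᶜ = ν K := by
    have := measure_compl hK.isClosed.measurableSet.compl (measure_ne_top ν _)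
    rw [compl_compl] at this
    exact this.symm
  exact h7 ▸ h6

lemma meas_ext_of_integral (μ ν : Measure X) [IsFiniteMeasure μ] [IsFiniteMeasure ν]
    [μ.InnerRegular] [ν.InnerRegular]
    (h : ∀ f : X → ℝ, Continuous f → ∫ x, f x ∂μ = ∫ x, f x ∂ν) : μ = ν := by
  have hcc : ∀ K : Set X, IsCompact K → μ K = ν K := fun K hK =>
    le_antisymm (meas_compact_le μ ν h hK)
      (meas_compact_le ν μ (fun f hf => (h f hf).symm) hK)
  ext s hs
  rw [MeasurableSet.measure_eq_iSup_isCompact hs μ,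
    MeasurableSet.measure_eq_iSup_isCompact hs ν]
  exact iSup_congr fun K => iSup_congr fun _ => iSup_congr fun hK => hcc K hK

end AuxMeasure

section AuxG

variable {M : Type*} [MetricSpace M]

lemma one_mem_GSet : (fun _ : StoneCech (Wt M) => (1:ℝ)) ∈ GSet M := by
  refine ⟨continuous_const, fun x u y hxu huy hxy => ?_⟩
  simpa using dist_triangle x u y

lemma gammaM_mul_le {x u y : M} (hxu : x ≠ u) (huy : u ≠ y) (hxy : x ≠ y) :
    gammaM M * dist x y ≤ dist x u + dist u y := by
  have hmem : (dist x u + dist u y) / dist x y ∈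
      {r : ℝ | ∃ x u y : M, x ≠ u ∧ u ≠ y ∧ x ≠ y ∧
        r = (dist x u + dist u y) / dist x y} := ⟨x, u, y, hxu, huy, hxy, rfl⟩
  have hbdd : BddBelow {r : ℝ | ∃ x u y : M, x ≠ u ∧ u ≠ y ∧ x ≠ y ∧
      r = (dist x u + dist u y) / dist x y} := by
    refine ⟨0, fun r hr => ?_⟩
    obtain ⟨a, b, c, _, _, _, rfl⟩ := hr
    positivity
  have := csInf_le hbdd hmem
  rw [le_div_iff₀ (dist_pos.2 hxy)] at this
  exact this

lemma shift_mem_GSet (hγ : 1 < gammaM M) {h : StoneCech (Wt M) → ℝ}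
    (hc : Continuous h) {B : ℝ} (hB : ∀ ζ, |h ζ| ≤ B) :
    (fun ζ => B * (gammaM M + 1) / (gammaM M - 1) + h ζ) ∈ GSet M := by
  refine ⟨continuous_const.add hc, fun x u y hxu huy hxy => ?_⟩
  set γ := gammaM M with hγdef
  set C := B * (γ + 1) / (γ - 1) with hCdef
  have hγ1 : (0:ℝ) < γ - 1 := sub_pos.2 hγ
  have hC : C * (γ - 1) = B * (γ + 1) := by
    rw [hCdef]; field_simp
  have hB0 : 0 ≤ B := (abs_nonneg _).trans (hB (stoneCechUnit ⟨(x, u), hxu⟩))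
  have hCB : γ * (C - B) = C + B := by linear_combination hC
  have hCgeB : B ≤ C := by nlinarith [hC]
  have ha : (0:ℝ) < dist x u := dist_pos.2 hxu
  have hb : (0:ℝ) < dist u y := dist_pos.2 huy
  have hcpos : (0:ℝ) < dist x y := dist_pos.2 hxy
  have htri : γ * dist x y ≤ dist x u + dist u y := gammaM_mul_le hxu huy hxy
  obtain ⟨h1l, h1r⟩ := abs_le.1 (hB (stoneCechUnit ⟨(x, y), hxy⟩))
  obtain ⟨h2l, h2r⟩ := abs_le.1 (hB (stoneCechUnit ⟨(x, u), hxu⟩))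
  obtain ⟨h3l, h3r⟩ := abs_le.1 (hB (stoneCechUnit ⟨(u, y), huy⟩))
  show dist x y * (C + h (stoneCechUnit ⟨(x, y), hxy⟩)) ≤
    dist x u * (C + h (stoneCechUnit ⟨(x, u), hxu⟩)) +
    dist u y * (C + h (stoneCechUnit ⟨(u, y), huy⟩))
  calc dist x y * (C + h (stoneCechUnit ⟨(x, y), hxy⟩))
      ≤ dist x y * (C + B) := by nlinarith
    _ = dist x y * (γ * (C - B)) := by rw [hCB]
    _ = (γ * dist x y) * (C - B) := by ring
    _ ≤ (dist x u + dist u y) * (C - B) :=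
        mul_le_mul_of_nonneg_right htri (by linarith)
    _ ≤ dist x u * (C + h (stoneCechUnit ⟨(x, u), hxu⟩)) +
        dist u y * (C + h (stoneCechUnit ⟨(u, y), huy⟩)) := by nlinarith

lemma deLeeuw_mem_GSet {f : M → ℝ} {F : StoneCech (Wt M) → ℝ} (hFc : Continuous F)
    (hFu : ∀ p : Wt M, F (stoneCechUnit p) = (f p.1.1 - f p.1.2) / dist p.1.1 p.1.2) :
    F ∈ GSet M ∧ (fun ζ => -F ζ) ∈ GSet M := by
  have key : ∀ (x y : M) (hxy : x ≠ y),
      dist x y * F (stoneCechUnit ⟨(x, y), hxy⟩) = f x - f y := by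
    intro x y hxy
    rw [hFu ⟨(x, y), hxy⟩]
    exact mul_div_cancel₀ _ (dist_ne_zero.2 hxy)
  have keyeq : ∀ (x u y : M) (hxu : x ≠ u) (huy : u ≠ y) (hxy : x ≠ y),
      dist x y * F (stoneCechUnit ⟨(x, y), hxy⟩) =
      dist x u * F (stoneCechUnit ⟨(x, u), hxu⟩) +
      dist u y * F (stoneCechUnit ⟨(u, y), huy⟩) := by
    intro x u y hxu huy hxy
    rw [key x y hxy, key x u hxu, key u y huy]; ring
  refine ⟨⟨hFc, fun x u y hxu huy hxy => (keyeq x u y hxu huy hxy).le⟩,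
    ⟨hFc.neg, fun x u y hxu huy hxy => ?_⟩⟩
  show dist x y * (-F (stoneCechUnit ⟨(x, y), hxy⟩)) ≤
    dist x u * (-F (stoneCechUnit ⟨(x, u), hxu⟩)) +
    dist u y * (-F (stoneCechUnit ⟨(u, y), huy⟩))
  have := keyeq x u y hxu huy hxy
  nlinarith [this]

lemma deLeeuw_le_one {f : M → ℝ} (hf : LipschitzWith 1 f)
    {F : StoneCech (Wt M) → ℝ} (hFc : Continuous F)
    (hFu : ∀ p : Wt M, F (stoneCechUnit p) = (f p.1.1 - f p.1.2) / dist p.1.1 p.1.2) :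
    ∀ ζ, F ζ ≤ 1 := by
  intro ζ
  refine DenseRange.induction_on denseRange_stoneCechUnit ζ
    (isClosed_le hFc continuous_const) (fun p => ?_)
  rw [hFu p]
  have hd : (0:ℝ) < dist p.1.1 p.1.2 := dist_pos.2 p.2
  rw [div_le_one hd]
  have := hf.dist_le_mul p.1.1 p.1.2
  simp only [NNReal.coe_one, one_mul, Real.dist_eq] at this
  exact (le_abs_self _).trans this

end AuxG

lemma stmt17_main {M : Type*} [MetricSpace M]
    [MeasurableSpace (StoneCech (Wt M))] [BorelSpace (StoneCech (Wt M))]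
    (basept : M) (hγ : 1 < gammaM M)
    (ν μ : Measure (StoneCech (Wt M)))
    [IsFiniteMeasure ν] [ν.InnerRegular] [IsFiniteMeasure μ] [μ.InnerRegular]
    (hopt : IsOptimal basept ν) (hle : Preceq μ ν) : μ = ν := by
  have htot1 : (μ Set.univ).toReal ≤ (ν Set.univ).toReal := by
    have := hle _ (one_mem_GSet (M := M))
    simp only [integral_const, smul_eq_mul, mul_one] at this; exact this
  have htot2 : (ν Set.univ).toReal ≤ (μ Set.univ).toReal := by
    rw [hopt]
    refine Real.sSup_le (fun r hr => ?_) ENNReal.toReal_nonneg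
    obtain ⟨f, hf, hf0, F, hFc, hFu, rfl⟩ := hr
    obtain ⟨hFG, hFnG⟩ := deLeeuw_mem_GSet hFc hFu
    have heq : ∫ ζ, F ζ ∂μ = ∫ ζ, F ζ ∂ν := by
      refine le_antisymm (hle F hFG) ?_
      have := hle _ hFnG
      rw [integral_neg, integral_neg] at this
      linarith
    rw [← heq]
    calc ∫ ζ, F ζ ∂μ ≤ ∫ _ζ, (1:ℝ) ∂μ :=
          integral_mono (integrable_of_cont μ hFc) (integrable_const 1)
            (deLeeuw_le_one hf hFc hFu)
      _ = (μ Set.univ).toReal := by simp; rfl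
  have htot : (μ Set.univ).toReal = (ν Set.univ).toReal := le_antisymm htot1 htot2
  refine meas_ext_of_integral μ ν (fun h hc => ?_)
  obtain ⟨B, hB⟩ := (isBounded_iff_forall_norm_le.mp (isCompact_range hc).isBounded)
  have hB' : ∀ ζ, |h ζ| ≤ B := fun ζ => by
    simpa [Real.norm_eq_abs] using hB (h ζ) (Set.mem_range_self ζ)
  have hBneg : ∀ ζ, |(-h ζ)| ≤ B := fun ζ => by simpa [abs_neg] using hB' ζ
  set C := B * (gammaM M + 1) / (gammaM M - 1) with hCdef
  have k1 := hle _ (shift_mem_GSet hγ hc hB')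
  have k2 := hle _ (shift_mem_GSet hγ hc.neg hBneg)
  rw [integral_add (integrable_const C) (integrable_of_cont μ hc),
    integral_add (integrable_const C) (integrable_of_cont ν hc)] at k1
  rw [integral_add (integrable_const C) (integrable_of_cont μ hc.neg),
    integral_add (integrable_const C) (integrable_of_cont ν hc.neg)] at k2
  simp only [Pi.neg_apply, integral_neg] at k2
  simp only [integral_const, smul_eq_mul, Measure.real] at k1 k2
  rw [htot] at k1 k2
  linarith

theorem stmt17 {M : Type*} [MetricSpace M]
    [MeasurableSpace (StoneCech (Wt M))] [BorelSpace (StoneCech (Wt M))]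
    (basept : M) (h3 : ∃ x y z : M, x ≠ y ∧ x ≠ z ∧ y ≠ z)
    (hγ : 1 < gammaM M)
    (ν μ : Measure (StoneCech (Wt M)))
    [IsFiniteMeasure ν] [ν.InnerRegular] [IsFiniteMeasure μ] [μ.InnerRegular]
    (hopt : IsOptimal basept ν) (hle : Preceq μ ν) :
    μ = ν ∧ IsMinimal ν := by
  refine ⟨stmt17_main basept hγ ν μ hopt hle, fun ν' hfin hreg hle' => ?_⟩
  haveI := hfin; haveI := hreg
  have hν' : ν' = ν := stmt17_main basept hγ ν ν' hopt hle'
  rw [hν']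
  exact fun g hg => le_rfl
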